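/- Let Y and Z be linearly independent vectors in ℝ^5 with η(Y,Y) ≠ 0 and η(Y, Y) + η(Z, Z) = 0. Then there exist real numbers ρ > 0 and θ such that the vectors Y' = ρ cos θ • Y - ρ sin θ • Z and Z' = ρ cos θ • Z + ρ sin θ • Y satisfy η(Y', Y') = 0, η(Z', Z') = 0 and η(Y', Z') = 1. (A timelike eigenplane of a complex eigenvalue contains a normalized pair of real null directions.) -/

import Mathlib

/-- The 5-dimensional Minkowski bilinear form of signature (-,+,+,+,+). -/
def eta (u v : Fin 5 → ℝ) : ℝ :=
  -u 0 * v 0 + u 1 * v 1 + u 2 * v 2 + u 3 * v 3 + u 4 * v 4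

lemma eta_comb (Y Z : Fin 5 → ℝ) (p q p' q' : ℝ) :
    eta (p • Y + q • Z) (p' • Y + q' • Z) =
      p * p' * eta Y Y + (p * q' + q * p') * eta Y Z + q * q' * eta Z Z := by
  simp [eta, Pi.add_apply, Pi.smul_apply, smul_eq_mul]
  ring

theorem timelike_plane_null_pair (Y Z : Fin 5 → ℝ)
    (hind : LinearIndependent ℝ ![Y, Z])
    (hY : eta Y Y ≠ 0) (hsum : eta Y Y + eta Z Z = 0) :
    ∃ ρ θ : ℝ, 0 < ρ ∧
      eta ((ρ * Real.cos θ) • Y - (ρ * Real.sin θ) • Z)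
          ((ρ * Real.cos θ) • Y - (ρ * Real.sin θ) • Z) = 0 ∧
      eta ((ρ * Real.cos θ) • Z + (ρ * Real.sin θ) • Y)
          ((ρ * Real.cos θ) • Z + (ρ * Real.sin θ) • Y) = 0 ∧
      eta ((ρ * Real.cos θ) • Y - (ρ * Real.sin θ) • Z)
          ((ρ * Real.cos θ) • Z + (ρ * Real.sin θ) • Y) = 1 := by
  set a := eta Y Y with ha
  set b := eta Y Z with hb
  have hc : eta Z Z = -a := by linarith
  set z : ℂ := ⟨b, a⟩ with hz
  have hz0 : z ≠ 0 := by
    intro h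
    apply hY
    have := congrArg Complex.im h
    simpa [hz] using this
  set r : ℝ := ‖z‖ with hr
  have hrpos : 0 < r := by
    rw [hr]; exact norm_pos_iff.mpr hz0
  have hcos : Real.cos (Complex.arg z) = b / r := by rw [Complex.cos_arg hz0]
  have hsin : Real.sin (Complex.arg z) = a / r := by rw [Complex.sin_arg]
  refine ⟨(Real.sqrt r)⁻¹, Complex.arg z / 2, inv_pos.mpr (Real.sqrt_pos.mpr hrpos), ?_, ?_, ?_⟩
  all_goals (
    set ρ : ℝ := (Real.sqrt r)⁻¹ with hρ
    set θ : ℝ := Complex.arg z / 2 with hθ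
    set C := Real.cos θ with hCdef
    set S := Real.sin θ with hSdef
    have hρ2 : ρ ^ 2 * r = 1 := by
      rw [hρ, inv_pow, Real.sq_sqrt hrpos.le]
      exact inv_mul_cancel₀ hrpos.ne'
    have h2θ : 2 * θ = Complex.arg z := by rw [hθ]; ring
    have hC : (C ^ 2 - S ^ 2) * r = b := by
      have h1 : C ^ 2 - S ^ 2 = b / r := by
        rw [hCdef, hSdef, ← Real.cos_two_mul', h2θ, hcos]
      rw [h1]; field_simp
    have hS : (2 * S * C) * r = a := by
      have h1 : 2 * S * C = a / r := by
        rw [hSdef, hCdef, ← Real.sin_two_mul, h2θ, hsin]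
      rw [h1]; field_simp )
  · rw [show ((ρ * C) • Y - (ρ * S) • Z) = (ρ * C) • Y + (-(ρ * S)) • Z by
        rw [neg_smul, sub_eq_add_neg]]
    rw [eta_comb, hc, ← ha, ← hb]
    linear_combination (-(ρ ^ 2) * (C ^ 2 - S ^ 2)) * hS + (ρ ^ 2 * (2 * S * C)) * hC
  · rw [show ((ρ * C) • Z + (ρ * S) • Y) = (ρ * S) • Y + (ρ * C) • Z by rw [add_comm]]
    rw [eta_comb, hc, ← ha, ← hb]
    linear_combination (ρ ^ 2 * (C ^ 2 - S ^ 2)) * hS + (-(ρ ^ 2) * (2 * S * C)) * hC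
  · rw [show ((ρ * C) • Y - (ρ * S) • Z) = (ρ * C) • Y + (-(ρ * S)) • Z by
        rw [neg_smul, sub_eq_add_neg],
      show ((ρ * C) • Z + (ρ * S) • Y) = (ρ * S) • Y + (ρ * C) • Z by rw [add_comm]]
    rw [eta_comb, hc, ← ha, ← hb]
    have hpyth : S ^ 2 + C ^ 2 = 1 := Real.sin_sq_add_cos_sq θ
    linear_combination (-2 * ρ ^ 2 * S * C) * hS + (-(ρ ^ 2) * (C ^ 2 - S ^ 2)) * hC +
      (ρ ^ 2 * r * (S ^ 2 + C ^ 2 + 1)) * hpyth + hρ2
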